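/- No uniform hash function family that is recursive over hashed values can be 3-wise independent. That is, if h(x_2,...,x_{n+1}) = F(h(x_1,...,x_n), τ(x_1), τ(x_{n+1})) for a fixed F and a randomized symbol hash τ, and h is uniform, then h is not 3-wise independent. -/

import Mathlib

open MeasureTheory

/-- A uniform hash function family that is recursive over hashed values
(`h(x_2,…,x_{n+1}) = F(h(x_1,…,x_n), τ(x_1), τ(x_{n+1}))` for a fixed `F` and a randomized
symbol hash `τ`) cannot be 3-wise independent. -/
theorem stmt_2
    {Ω : Type*} [MeasurableSpace Ω] (μ : Measure Ω) [IsProbabilityMeasure μ]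
    {A : Type*} [Nontrivial A] (n L : ℕ) (hn : 2 ≤ n) (hL : 1 ≤ L)
    (H : Ω → (Fin n → A) → Fin (2 ^ L))
    (τ : Ω → A → Fin (2 ^ L))
    (F : Fin (2 ^ L) → Fin (2 ^ L) → Fin (2 ^ L) → Fin (2 ^ L))
    (hmeas : ∀ (u : Fin n → A) (y : Fin (2 ^ L)), MeasurableSet {ω | H ω u = y})
    (hrec : ∀ ω (x : Fin (n + 1) → A),
      H ω (fun i => x i.succ) =
        F (H ω (fun i => x i.castSucc)) (τ ω (x 0)) (τ ω (x (Fin.last n))))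
    (hunif : ∀ (u : Fin n → A) (y : Fin (2 ^ L)), μ {ω | H ω u = y} = 1 / 2 ^ L) :
    ¬ (∀ (u₁ u₂ u₃ : Fin n → A), u₁ ≠ u₂ → u₁ ≠ u₃ → u₂ ≠ u₃ →
        ∀ y₁ y₂ y₃ : Fin (2 ^ L),
          μ {ω | H ω u₁ = y₁ ∧ H ω u₂ = y₂ ∧ H ω u₃ = y₃} = 1 / 2 ^ (3 * L)) := by
  intro h3
  obtain ⟨a, b, hab⟩ := exists_pair_ne A
  set u₁ : Fin n → A := fun _ => a with hu₁
  set u₂ : Fin n → A := fun i => if (i : ℕ) < n - 1 then a else b with hu₂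
  set u₃ : Fin n → A := fun i => if (i : ℕ) < n - 2 then a else b with hu₃
  -- first recursion step: H u₂ = F (H u₁) (τ a) (τ b)
  have key1 : ∀ ω, H ω u₂ = F (H ω u₁) (τ ω a) (τ ω b) := by
    intro ω
    have h := hrec ω (fun i : Fin (n + 1) => if (i : ℕ) < n then a else b)
    simp only [Fin.val_succ, Fin.coe_castSucc, Fin.val_last, Fin.val_zero] at h
    have e1 : (fun i : Fin n => if (i : ℕ) + 1 < n then a else b) = u₂ := by
      funext i
      have : ((i : ℕ) + 1 < n) ↔ ((i : ℕ) < n - 1) := by omega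
      simp [hu₂, this]
    have e2 : (fun i : Fin n => if (i : ℕ) < n then a else b) = u₁ := by
      funext i; simp [hu₁, i.isLt]
    rw [e1, e2] at h
    rw [h]; simp [show (0 : ℕ) < n by omega]
  -- second recursion step: H u₃ = F (H u₂) (τ a) (τ b)
  have key2 : ∀ ω, H ω u₃ = F (H ω u₂) (τ ω a) (τ ω b) := by
    intro ω
    have h := hrec ω (fun i : Fin (n + 1) => if (i : ℕ) < n - 1 then a else b)
    simp only [Fin.val_succ, Fin.coe_castSucc, Fin.val_last, Fin.val_zero] at h
    have e1 : (fun i : Fin n => if (i : ℕ) + 1 < n - 1 then a else b) = u₃ := by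
      funext i
      have : ((i : ℕ) + 1 < n - 1) ↔ ((i : ℕ) < n - 2) := by omega
      simp [hu₃, this]
    have e2 : (fun i : Fin n => if (i : ℕ) < n - 1 then a else b) = u₂ := by
      funext i; simp [hu₂]
    rw [e1, e2] at h
    rw [h]; simp [show (0 : ℕ) < n - 1 by omega, show ¬ n < n - 1 by omega]
  -- pairwise distinctness of u₁, u₂, u₃
  have i1 : Fin n := ⟨n - 1, by omega⟩
  have i2 : Fin n := ⟨n - 2, by omega⟩
  have d12 : u₁ ≠ u₂ := by
    intro h
    have := congrFun h ⟨n - 1, by omega⟩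
    simp only [hu₁, hu₂] at this
    rw [if_neg (show ¬ ((⟨n - 1, by omega⟩ : Fin n) : ℕ) < n - 1 by simp)] at this
    exact hab this
  have d13 : u₁ ≠ u₃ := by
    intro h
    have := congrFun h ⟨n - 1, by omega⟩
    simp only [hu₁, hu₃] at this
    rw [if_neg (show ¬ ((⟨n - 1, by omega⟩ : Fin n) : ℕ) < n - 2 by simp; omega)] at this
    exact hab this
  have d23 : u₂ ≠ u₃ := by
    intro h
    have := congrFun h ⟨n - 2, by omega⟩
    simp only [hu₂, hu₃] at this
    rw [if_pos (show ((⟨n - 2, by omega⟩ : Fin n) : ℕ) < n - 1 by simp; omega),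
      if_neg (show ¬ ((⟨n - 2, by omega⟩ : Fin n) : ℕ) < n - 2 by simp)] at this
    exact hab this
  -- 0 ≠ 1 in Fin (2^L)
  have hsize : 2 ≤ 2 ^ L := by
    calc 2 = 2 ^ 1 := rfl
    _ ≤ 2 ^ L := Nat.pow_le_pow_right (by norm_num) hL
  set y0 : Fin (2 ^ L) := ⟨0, by omega⟩ with hy0
  set y1 : Fin (2 ^ L) := ⟨1, by omega⟩ with hy1
  have h01 : y1 ≠ y0 := by
    intro h
    have := congrArg Fin.val h
    simp [hy0, hy1] at this
  -- the bad event is empty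
  have hempty : {ω | H ω u₁ = y0 ∧ H ω u₂ = y0 ∧ H ω u₃ = y1} = (∅ : Set Ω) := by
    ext ω
    simp only [Set.mem_setOf_eq, Set.mem_empty_iff_false, iff_false]
    rintro ⟨h1, h2, h3'⟩
    have e : H ω u₃ = y0 := by
      rw [key2 ω, h2, ← h1, ← key1 ω, h1, h2]
    rw [h3'] at e
    exact h01 e
  have := h3 u₁ u₂ u₃ d12 d13 d23 y0 y0 y1
  rw [hempty, measure_empty] at this
  have hne : (1 : ENNReal) / 2 ^ (3 * L) ≠ 0 := by
    simp only [ne_eq, ENNReal.div_eq_zero_iff, one_ne_zero, false_or]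
    exact ENNReal.pow_ne_top (by norm_num)
  exact hne this.symm
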